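/- Let $w \in A_1$ on $\mathbb{R}^n$, $m \ge 1$, and let $\{Q_j = Q(c_j, r_j)\}_{j\ge1}$ be pairwise disjoint cubes with union $\Omega$ and $\Omega^* = \bigcup_j 2\sqrt{n}\,Q_j$. Then for any $\delta > 0$, $\sum_{j=1}^{\infty} \int_{Q_j} w(y)^{1/m} \int_{\mathbb{R}^n \setminus \Omega^*} \frac{r_j^{\delta}\, w(x)^{(m-1)/m}}{|x - y|^{n+\delta}}\,dx\,dy \le C_{n,m,\delta}\, [w]_{A_1}^{(2m-2)/m}\, w(\Omega)$. -/

import Mathlib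

open MeasureTheory ENNReal Set Filter

noncomputable section

abbrev Rn (n : ℕ) := EuclideanSpace ℝ (Fin n)

def cube {n : ℕ} (c : Rn n) (r : ℝ) : Set (Rn n) := {x | ∀ i, |x i - c i| ≤ r / 2}

def A1Bound {n : ℕ} (w : Rn n → ℝ) (C : ℝ) : Prop :=
  ∀ (c : Rn n) (r : ℝ), 0 < r →
    ∫ x in cube c r, w x ≤
      C * (volume (cube c r)).toReal * essInf w (volume.restrict (cube c r))

/-! ### Auxiliary lemmas -/

lemma coord_le_norm {n : ℕ} (x : Rn n) (i : Fin n) : |x i| ≤ ‖x‖ := by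
  rw [EuclideanSpace.norm_eq]
  have h1 : |x i| = Real.sqrt (‖x i‖ ^ 2) := by
    rw [Real.sqrt_sq_eq_abs]; simp [Real.norm_eq_abs]
  rw [h1]
  apply Real.sqrt_le_sqrt
  exact Finset.single_le_sum (f := fun j => ‖x j‖ ^ 2) (fun j _ => sq_nonneg _)
    (Finset.mem_univ i)

lemma cube_eq_preimage {n : ℕ} (c : Rn n) (r : ℝ) :
    cube c r = (MeasurableEquiv.toLp 2 (Fin n → ℝ)).symm ⁻¹'
      (Set.univ.pi fun i => Icc (c i - r / 2) (c i + r / 2)) := by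
  ext x
  have hxi : ∀ i, (MeasurableEquiv.toLp 2 (Fin n → ℝ)).symm x i = x i := fun _ => rfl
  simp only [cube, mem_preimage, Set.mem_pi, mem_univ, forall_true_left, mem_Icc,
    mem_setOf_eq, hxi, abs_le]
  constructor
  · intro h i; have := h i; constructor <;> linarith [this.1, this.2]
  · intro h i; have := h i; constructor <;> linarith [this.1, this.2]

lemma cube_measurable {n : ℕ} (c : Rn n) (r : ℝ) : MeasurableSet (cube c r) := by
  rw [cube_eq_preimage]
  exact (MeasurableEquiv.toLp 2 (Fin n → ℝ)).symm.measurable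
    (MeasurableSet.univ_pi fun i => measurableSet_Icc)

lemma volume_cube {n : ℕ} (c : Rn n) (r : ℝ) (hr : 0 ≤ r) :
    volume (cube c r) = ENNReal.ofReal (r ^ n) := by
  rw [cube_eq_preimage]
  rw [(EuclideanSpace.volume_preserving_symm_measurableEquiv_toLp (Fin n)).measure_preimage
    ((MeasurableSet.univ_pi fun i => measurableSet_Icc).nullMeasurableSet)]
  rw [volume_pi_pi]
  have : ∀ i : Fin n, volume (Icc (c i - r / 2) (c i + r / 2)) = ENNReal.ofReal r := by
    intro i; rw [Real.volume_Icc]; ring_nf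
  simp only [this, Finset.prod_const, Finset.card_univ, Fintype.card_fin]
  rw [← ENNReal.ofReal_pow hr]

lemma norm_sub_center_le {n : ℕ} {c : Rn n} {r : ℝ} (hr : 0 ≤ r) {y : Rn n}
    (hy : y ∈ cube c r) : ‖y - c‖ ≤ Real.sqrt n * r / 2 := by
  rw [EuclideanSpace.norm_eq]
  have h1 : ∀ i : Fin n, ‖(y - c) i‖ ^ 2 ≤ (r / 2) ^ 2 := by
    intro i
    have h2 : (y - c) i = y i - c i := by simp
    rw [h2, Real.norm_eq_abs]
    exact pow_le_pow_left₀ (abs_nonneg _) (hy i) 2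
  have h3 : (∑ i : Fin n, ‖(y - c) i‖ ^ 2) ≤ n * (r / 2) ^ 2 := by
    calc (∑ i : Fin n, ‖(y - c) i‖ ^ 2) ≤ ∑ _i : Fin n, (r / 2) ^ 2 :=
          Finset.sum_le_sum fun i _ => h1 i
      _ = n * (r / 2) ^ 2 := by simp [Finset.sum_const, Finset.card_univ]
  calc Real.sqrt (∑ i : Fin n, ‖(y - c) i‖ ^ 2) ≤ Real.sqrt (n * (r / 2) ^ 2) :=
        Real.sqrt_le_sqrt h3
    _ = Real.sqrt n * (r / 2) := by
        rw [Real.sqrt_mul (by positivity), Real.sqrt_sq (by linarith)]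
    _ = Real.sqrt n * r / 2 := by ring

lemma norm_gt_of_not_mem_cube {n : ℕ} {c : Rn n} {s : ℝ} {x : Rn n}
    (hx : x ∉ cube c s) : s / 2 < ‖x - c‖ := by
  simp only [cube, mem_setOf_eq, not_forall, not_le] at hx
  obtain ⟨i, hi⟩ := hx
  have h2 : (x - c) i = x i - c i := by simp
  calc s / 2 < |x i - c i| := hi
    _ = |(x - c) i| := by rw [h2]
    _ ≤ ‖x - c‖ := coord_le_norm _ i

lemma cube_isClosed {n : ℕ} (c : Rn n) (r : ℝ) : IsClosed (cube c r) := by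
  have : cube c r = ⋂ i : Fin n, {x : Rn n | |x i - c i| ≤ r / 2} := by
    ext x; simp [cube]
  rw [this]
  apply isClosed_iInter
  intro i
  have hc : Continuous fun x : Rn n => |x i - c i| := by
    apply Continuous.abs
    apply Continuous.sub _ continuous_const
    exact (EuclideanSpace.proj i).continuous
  exact isClosed_le hc continuous_const

lemma cube_isCompact {n : ℕ} (c : Rn n) {r : ℝ} (hr : 0 ≤ r) : IsCompact (cube c r) := by
  apply IsCompact.of_isClosed_subset (isCompact_closedBall c (Real.sqrt n * r / 2))
    (cube_isClosed c r)
  intro y hy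
  rw [Metric.mem_closedBall, dist_eq_norm]
  exact norm_sub_center_le hr hy

lemma cube_mono {n : ℕ} (c : Rn n) {r s : ℝ} (h : r ≤ s) : cube c r ⊆ cube c s :=
  fun x hx i => le_trans (hx i) (by linarith)

lemma exists_pow_two {t : ℝ} (ht : 1 ≤ t) : ∃ k : ℕ, 2 ^ k ≤ t ∧ t < 2 ^ (k + 1) := by
  have hex : ∃ k : ℕ, t < 2 ^ (k + 1) := by
    obtain ⟨k, hk⟩ := pow_unbounded_of_one_lt t (by norm_num : (1:ℝ) < 2)
    exact ⟨k, lt_of_lt_of_le hk (by apply pow_le_pow_right₀ <;> norm_num)⟩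
  classical
  let k := Nat.find hex
  refine ⟨k, ?_, Nat.find_spec hex⟩
  rcases Nat.eq_zero_or_pos k with hk | hk
  · rw [hk]; simpa using ht
  · obtain ⟨k', hk'⟩ := Nat.exists_eq_succ_of_ne_zero hk.ne'
    have := Nat.find_min hex (m := k') (by omega)
    push_neg at this
    calc (2:ℝ) ^ k = 2 ^ (k' + 1) := by rw [hk']
    _ ≤ t := this

lemma lint_rpow_le {α : Type*} [MeasurableSpace α] (μ : Measure α) (f : α → ℝ≥0∞)
    (hf : AEMeasurable f μ) {γ : ℝ} (hγ0 : 0 ≤ γ) (hγ1 : γ ≤ 1) :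
    ∫⁻ a, (f a) ^ γ ∂μ ≤ (∫⁻ a, f a ∂μ) ^ γ * (μ Set.univ) ^ (1 - γ) := by
  rcases eq_or_lt_of_le hγ0 with h0 | h0
  · simp [← h0, lintegral_const, Measure.restrict_univ]
  rcases eq_or_lt_of_le hγ1 with h1 | h1
  · simp [h1]
  have hγ1' : (0:ℝ) < 1 - γ := by linarith
  have hpq : Real.HolderConjugate (1/γ) (1/(1-γ)) := by
    rw [Real.holderConjugate_iff]
    constructor
    · rw [lt_div_iff₀ h0]; linarith
    · rw [one_div, one_div, inv_inv, inv_inv]; ring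
  have key := ENNReal.lintegral_mul_le_Lp_mul_Lq μ hpq
    (f := fun a => (f a) ^ γ) (g := fun _ => (1:ℝ≥0∞)) (hf.pow_const _) aemeasurable_const
  simp only [Pi.mul_apply] at key
  calc ∫⁻ a, (f a) ^ γ ∂μ = ∫⁻ a, (f a) ^ γ * 1 ∂μ := by simp
    _ ≤ (∫⁻ a, ((f a) ^ γ) ^ (1/γ) ∂μ) ^ (1/(1/γ)) *
        (∫⁻ a, ((1:ℝ≥0∞)) ^ (1/(1-γ)) ∂μ) ^ (1/(1/(1-γ))) := key
    _ = (∫⁻ a, f a ∂μ) ^ γ * (μ Set.univ) ^ (1 - γ) := by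
        rw [one_div_one_div, one_div_one_div]
        congr 1
        · congr 1
          apply lintegral_congr
          intro a
          rw [← ENNReal.rpow_mul, mul_one_div, div_self h0.ne', ENNReal.rpow_one]
        · simp [lintegral_const]

lemma real_annulus (n k : ℕ) (hn : 0 < n) {rq δ : ℝ} (hr : 0 < rq) (hδ : 0 < δ)
    {Cg Wg : ℝ} (hC : 0 ≤ Cg) (hW : 0 ≤ Wg) :
    rq ^ δ / (Real.sqrt n * rq * 2 ^ k / 2) ^ ((n : ℝ) + δ) *
      (Cg * Wg * (Real.sqrt n * rq * 2 ^ (k + 2)) ^ n) ≤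
    8 ^ n * 2 ^ δ * Cg * Wg * ((2 : ℝ) ^ (-δ)) ^ k := by
  have hsqrt : (1:ℝ) ≤ Real.sqrt n := by
    rw [show (1:ℝ) = Real.sqrt 1 by simp]
    exact Real.sqrt_le_sqrt (by exact_mod_cast hn)
  set R : ℝ := Real.sqrt n * rq with hR
  have hR0 : 0 < R := by positivity
  set a : ℝ := R * 2 ^ k with ha
  have ha0 : 0 < a := by positivity
  have h2k : (0:ℝ) < 2 ^ k := by positivity
  have hden : (a / 2) ^ ((n : ℝ) + δ) = (a ^ n * a ^ δ) / (2 ^ n * 2 ^ δ) := by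
    rw [Real.div_rpow ha0.le (by norm_num), Real.rpow_add ha0, Real.rpow_natCast,
      Real.rpow_add (by norm_num : (0:ℝ) < 2), Real.rpow_natCast]
  have hnum : (R * 2 ^ (k + 2)) ^ n = 4 ^ n * a ^ n := by
    have : R * 2 ^ (k + 2) = 4 * a := by rw [ha, pow_add]; ring
    rw [this, mul_pow]
  have hfrac : rq ^ δ / a ^ δ ≤ ((2:ℝ) ^ (-δ)) ^ k := by
    have h1 : rq ^ δ / a ^ δ = (rq / a) ^ δ := by
      rw [Real.div_rpow hr.le ha0.le]
    have h2 : rq / a ≤ (2 ^ k : ℝ)⁻¹ := by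
      rw [ha, hR, div_le_iff₀ ha0]
      have : (2 ^ k : ℝ)⁻¹ * (Real.sqrt ↑n * rq * 2 ^ k) = Real.sqrt n * rq := by
        field_simp
      rw [this]
      nlinarith
    have h3 : (rq / a) ^ δ ≤ ((2 ^ k : ℝ)⁻¹) ^ δ :=
      Real.rpow_le_rpow (by positivity) h2 hδ.le
    have h4 : ((2 ^ k : ℝ)⁻¹) ^ δ = ((2:ℝ) ^ (-δ)) ^ k := by
      rw [← Real.rpow_natCast (2:ℝ) k, ← Real.rpow_neg_one,
        ← Real.rpow_natCast ((2:ℝ) ^ (-δ)) k, ← Real.rpow_mul (by norm_num),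
        ← Real.rpow_mul (by norm_num), ← Real.rpow_mul (by norm_num)]
      ring_nf
    rw [h1]; exact h3.trans_eq h4
  have han : (0:ℝ) < a ^ n := by positivity
  have haδ : (0:ℝ) < a ^ δ := Real.rpow_pos_of_pos ha0 δ
  have h2δ : (0:ℝ) < 2 ^ δ := Real.rpow_pos_of_pos (by norm_num) δ
  have hkey : rq ^ δ / (a / 2) ^ ((n : ℝ) + δ) * (Cg * Wg * (4 ^ n * a ^ n)) =
      (2 ^ n * 4 ^ n * 2 ^ δ * Cg * Wg) * (rq ^ δ / a ^ δ) := by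
    rw [hden]
    field_simp
  have hfin : rq ^ δ / (a / 2) ^ ((n : ℝ) + δ) * (Cg * Wg * (4 ^ n * a ^ n)) ≤
      8 ^ n * 2 ^ δ * Cg * Wg * ((2 : ℝ) ^ (-δ)) ^ k := by
    rw [hkey]
    have h8 : (2:ℝ) ^ n * 4 ^ n = 8 ^ n := by
      rw [← mul_pow]; norm_num
    rw [mul_comm ((2:ℝ) ^ n * 4 ^ n * 2 ^ δ * Cg * Wg) _]
    calc rq ^ δ / a ^ δ * (2 ^ n * 4 ^ n * 2 ^ δ * Cg * Wg)
        ≤ ((2 : ℝ) ^ (-δ)) ^ k * (2 ^ n * 4 ^ n * 2 ^ δ * Cg * Wg) := by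
          apply mul_le_mul_of_nonneg_right hfrac (by positivity)
      _ = 8 ^ n * 2 ^ δ * Cg * Wg * ((2 : ℝ) ^ (-δ)) ^ k := by rw [h8]; ring
  calc rq ^ δ / (R * 2 ^ k / 2) ^ ((n : ℝ) + δ) * (Cg * Wg * (R * 2 ^ (k + 2)) ^ n)
      = rq ^ δ / (a / 2) ^ ((n : ℝ) + δ) * (Cg * Wg * (4 ^ n * a ^ n)) := by
        rw [hnum, ha]
    _ ≤ _ := hfin

section MainLemmas

variable {n : ℕ} {w : Rn n → ℝ} {Cw : ℝ}
  (hw : LocallyIntegrable w volume) (hpos : ∀ᵐ x, 0 < w x) (hCw0 : 0 ≤ Cw)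
  (hA1 : A1Bound w Cw)

include hw hpos hCw0 hA1 in
lemma claimD (c : Rn n) {rq s : ℝ} (hr : 0 < rq) (hs : rq ≤ s) {γ : ℝ}
    (hγ0 : 0 ≤ γ) (hγ1 : γ ≤ 1) :
    ∫⁻ x in cube c s, ENNReal.ofReal (w x ^ γ) ≤
      ENNReal.ofReal (Cw ^ γ * ((∫ y in cube c rq, w y) / rq ^ n) ^ γ * s ^ n) := by
  set W : ℝ := (∫ y in cube c rq, w y) / rq ^ n with hWdef
  have hs0 : 0 < s := lt_of_lt_of_le hr hs
  have hrn : (0:ℝ) < rq ^ n := pow_pos hr n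
  have hsn : (0:ℝ) < s ^ n := pow_pos hs0 n
  have hae0 : ∀ᵐ x, 0 ≤ w x := hpos.mono fun x hx => hx.le
  have hW0 : 0 ≤ W := by
    apply div_nonneg _ hrn.le
    exact integral_nonneg_of_ae (ae_restrict_of_ae hae0)
  have hint : ∀ t : ℝ, 0 ≤ t → IntegrableOn w (cube c t) volume :=
    fun t ht => hw.integrableOn_isCompact (cube_isCompact c ht)
  set E : ℝ := essInf w (volume.restrict (cube c s)) with hEdef
  have hEW : E ≤ W := by
    have hbdd : IsBoundedUnder (· ≥ ·) (ae (volume.restrict (cube c s))) w :=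
      ⟨0, by simpa [eventually_map] using ae_restrict_of_ae hae0⟩
    have h1 : ∀ᵐ y ∂(volume.restrict (cube c s)), E ≤ w y := ae_essInf_le hbdd
    have h2 : ∀ᵐ y ∂(volume.restrict (cube c rq)), E ≤ w y := by
      have hle : volume.restrict (cube c rq) ≤ volume.restrict (cube c s) :=
        Measure.restrict_mono (cube_mono c hs) le_rfl
      exact (Measure.absolutelyContinuous_of_le hle).ae_le h1
    have h3 : ∫ _y in cube c rq, E ≤ ∫ y in cube c rq, w y := by
      apply integral_mono_ae _ (hint rq hr.le) h2
      exact integrableOn_const (by rw [volume_cube c rq hr.le]; exact ofReal_ne_top)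
    rw [setIntegral_const, measureReal_def, volume_cube c rq hr.le, ENNReal.toReal_ofReal hrn.le,
      smul_eq_mul] at h3
    rw [hWdef, le_div_iff₀ hrn]
    linarith [h3]
  have hA : ∫ x in cube c s, w x ≤ Cw * s ^ n * W := by
    have h1 := hA1 c s hs0
    rw [volume_cube c s hs0.le, ENNReal.toReal_ofReal hsn.le] at h1
    calc ∫ x in cube c s, w x ≤ Cw * s ^ n * E := h1
      _ ≤ Cw * s ^ n * W := by
          apply mul_le_mul_of_nonneg_left hEW (by positivity)
  have hlw : ∫⁻ x in cube c s, ENNReal.ofReal (w x) ≤ ENNReal.ofReal (Cw * s ^ n * W) := by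
    rw [← ofReal_integral_eq_lintegral_ofReal (hint s hs0.le) (ae_restrict_of_ae hae0)]
    exact ENNReal.ofReal_le_ofReal hA
  have hcongr : ∫⁻ x in cube c s, ENNReal.ofReal (w x ^ γ) =
      ∫⁻ x in cube c s, (ENNReal.ofReal (w x)) ^ γ := by
    apply lintegral_congr_ae
    filter_upwards [ae_restrict_of_ae hpos] with x hx
    rw [ENNReal.ofReal_rpow_of_pos hx]
  have hmeas : AEMeasurable (fun x => ENNReal.ofReal (w x)) (volume.restrict (cube c s)) :=
    (ENNReal.measurable_ofReal.comp_aemeasurable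
      hw.aestronglyMeasurable.aemeasurable).restrict
  calc ∫⁻ x in cube c s, ENNReal.ofReal (w x ^ γ)
      = ∫⁻ x in cube c s, (ENNReal.ofReal (w x)) ^ γ := hcongr
    _ ≤ (∫⁻ x in cube c s, ENNReal.ofReal (w x)) ^ γ *
        ((volume.restrict (cube c s)) Set.univ) ^ (1 - γ) :=
        lint_rpow_le _ _ hmeas hγ0 hγ1
    _ ≤ (ENNReal.ofReal (Cw * s ^ n * W)) ^ γ * (ENNReal.ofReal (s ^ n)) ^ (1 - γ) := by
        rw [Measure.restrict_apply_univ, volume_cube c s hs0.le]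
        exact mul_le_mul_left (ENNReal.rpow_le_rpow hlw hγ0) _
    _ = ENNReal.ofReal (Cw ^ γ * W ^ γ * s ^ n) := by
        rw [ENNReal.ofReal_rpow_of_nonneg (by positivity) hγ0,
          ENNReal.ofReal_rpow_of_nonneg hsn.le (by linarith),
          ← ENNReal.ofReal_mul (by positivity)]
        congr 1
        rw [Real.mul_rpow (by positivity) hW0, Real.mul_rpow hCw0 hsn.le]
        have key : (s ^ n : ℝ) ^ γ * (s ^ n) ^ (1 - γ) = s ^ n := by
          rw [← Real.rpow_add hsn]; norm_num
        linear_combination (Cw ^ γ * W ^ γ) * key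

include hw hpos hCw0 hA1 in
lemma inner_bound (hn : 0 < n) {δ : ℝ} (hδ : 0 < δ) (c : Rn n) {rq : ℝ} (hr : 0 < rq)
    {γ : ℝ} (hγ0 : 0 ≤ γ) (hγ1 : γ ≤ 1) {y : Rn n} (hy : y ∈ cube c rq)
    {T : Set (Rn n)} (hT : T ⊆ (cube c (2 * Real.sqrt n * rq))ᶜ) :
    ∫⁻ x in T, ENNReal.ofReal (rq ^ δ * w x ^ γ / ‖x - y‖ ^ ((n : ℝ) + δ)) ≤
      ENNReal.ofReal ((8 ^ n * 2 ^ δ * (1 - (2:ℝ) ^ (-δ))⁻¹) *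
        (Cw ^ γ * ((∫ z in cube c rq, w z) / rq ^ n) ^ γ)) := by
  have hsqrt : (1:ℝ) ≤ Real.sqrt n := by
    rw [show (1:ℝ) = Real.sqrt 1 by simp]
    exact Real.sqrt_le_sqrt (by exact_mod_cast hn)
  set W : ℝ := (∫ z in cube c rq, w z) / rq ^ n with hWdef
  have hW0 : 0 ≤ W := by
    apply div_nonneg _ (pow_pos hr n).le
    exact integral_nonneg_of_ae (ae_restrict_of_ae (hpos.mono fun x hx => hx.le))
  set R : ℝ := Real.sqrt n * rq with hRdef
  have hR0 : 0 < R := by positivity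
  have hyc : ‖y - c‖ ≤ R / 2 := by
    have := norm_sub_center_le hr.le hy
    rw [hRdef]; linarith
  set A : ℕ → Set (Rn n) := fun k => {x | R * 2 ^ k ≤ ‖x - c‖ ∧ ‖x - c‖ < R * 2 ^ (k + 1)}
    with hAdef
  have hAmeas : ∀ k, MeasurableSet (A k) := by
    intro k
    have hcont : Continuous fun x : Rn n => ‖x - c‖ :=
      (continuous_id.sub continuous_const).norm
    exact hcont.measurable measurableSet_Ico
  have hTsub : T ⊆ ⋃ k, A k := by
    intro x hx
    have hxR : R < ‖x - c‖ := by
      have := norm_gt_of_not_mem_cube (hT hx)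
      rw [hRdef]; linarith [this]
    have ht1 : 1 ≤ ‖x - c‖ / R := by
      rw [le_div_iff₀ hR0]; linarith
    obtain ⟨k, hk1, hk2⟩ := exists_pow_two ht1
    refine mem_iUnion.2 ⟨k, ?_, ?_⟩
    · rw [le_div_iff₀ hR0] at hk1; linarith
    · rw [div_lt_iff₀ hR0] at hk2; linarith
  have hann : ∀ k : ℕ,
      ∫⁻ x in A k, ENNReal.ofReal (rq ^ δ * w x ^ γ / ‖x - y‖ ^ ((n : ℝ) + δ)) ≤
        ENNReal.ofReal (8 ^ n * 2 ^ δ * Cw ^ γ * W ^ γ) *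
          ENNReal.ofReal ((2:ℝ) ^ (-δ)) ^ k := by
    intro k
    set Z : ℝ := (R * 2 ^ k / 2) ^ ((n : ℝ) + δ) with hZdef
    have hZ0 : 0 < Z := by
      apply Real.rpow_pos_of_pos; positivity
    set Dk : ℝ := rq ^ δ / Z with hDdef
    have hD0 : 0 ≤ Dk := by positivity
    have step1 : ∫⁻ x in A k, ENNReal.ofReal (rq ^ δ * w x ^ γ / ‖x - y‖ ^ ((n : ℝ) + δ)) ≤
        ∫⁻ x in A k, ENNReal.ofReal Dk * ENNReal.ofReal (w x ^ γ) := by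
      apply lintegral_mono_ae
      filter_upwards [ae_restrict_mem (hAmeas k), ae_restrict_of_ae hpos] with x hxA hxw
      have hwγ : 0 ≤ w x ^ γ := Real.rpow_nonneg hxw.le γ
      have hnorm : R * 2 ^ k / 2 ≤ ‖x - y‖ := by
        have h1 : ‖x - c‖ ≤ ‖x - y‖ + ‖y - c‖ := by
          calc ‖x - c‖ = ‖(x - y) + (y - c)‖ := by abel_nf
            _ ≤ ‖x - y‖ + ‖y - c‖ := norm_add_le _ _
        have h2 : R * 2 ^ k ≤ ‖x - c‖ := hxA.1
        have h3 : R / 2 ≤ R * 2 ^ k / 2 := by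
          have : (1:ℝ) ≤ 2 ^ k := one_le_pow₀ (by norm_num)
          nlinarith
        linarith
      have hZle : Z ≤ ‖x - y‖ ^ ((n : ℝ) + δ) := by
        rw [hZdef]
        apply Real.rpow_le_rpow (by positivity) hnorm (by positivity)
      have hptwise : rq ^ δ * w x ^ γ / ‖x - y‖ ^ ((n : ℝ) + δ) ≤ Dk * w x ^ γ := by
        rw [hDdef, div_mul_eq_mul_div]
        exact div_le_div_of_nonneg_left (by positivity) hZ0 hZle
      calc ENNReal.ofReal (rq ^ δ * w x ^ γ / ‖x - y‖ ^ ((n : ℝ) + δ))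
          ≤ ENNReal.ofReal (Dk * w x ^ γ) := ENNReal.ofReal_le_ofReal hptwise
        _ = ENNReal.ofReal Dk * ENNReal.ofReal (w x ^ γ) := ENNReal.ofReal_mul hD0
    have step2 : ∫⁻ x in A k, ENNReal.ofReal Dk * ENNReal.ofReal (w x ^ γ) =
        ENNReal.ofReal Dk * ∫⁻ x in A k, ENNReal.ofReal (w x ^ γ) :=
      lintegral_const_mul' _ _ ENNReal.ofReal_ne_top
    have hsub : A k ⊆ cube c (R * 2 ^ (k + 2)) := by
      intro x hx i
      have h1 : |(x - c) i| ≤ ‖x - c‖ := coord_le_norm _ i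
      have h2 : (x - c) i = x i - c i := by simp
      rw [h2] at h1
      have h3 : ‖x - c‖ < R * 2 ^ (k + 1) := hx.2
      have h4 : R * 2 ^ (k + 2) / 2 = R * 2 ^ (k + 1) := by
        rw [pow_succ]; ring
      rw [h4]; linarith
    have step3 : ∫⁻ x in A k, ENNReal.ofReal (w x ^ γ) ≤
        ENNReal.ofReal (Cw ^ γ * W ^ γ * (R * 2 ^ (k + 2)) ^ n) := by
      calc ∫⁻ x in A k, ENNReal.ofReal (w x ^ γ)
          ≤ ∫⁻ x in cube c (R * 2 ^ (k + 2)), ENNReal.ofReal (w x ^ γ) :=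
            lintegral_mono_set hsub
        _ ≤ _ := claimD hw hpos hCw0 hA1 c hr
            (by nlinarith [one_le_pow₀ (a := (2:ℝ)) (n := k + 2) (by norm_num)]) hγ0 hγ1
    calc ∫⁻ x in A k, ENNReal.ofReal (rq ^ δ * w x ^ γ / ‖x - y‖ ^ ((n : ℝ) + δ))
        ≤ ENNReal.ofReal Dk * ENNReal.ofReal (Cw ^ γ * W ^ γ * (R * 2 ^ (k + 2)) ^ n) :=
          step1.trans (step2.le.trans (mul_le_mul_right step3 _))
      _ = ENNReal.ofReal (Dk * (Cw ^ γ * W ^ γ * (R * 2 ^ (k + 2)) ^ n)) :=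
          (ENNReal.ofReal_mul hD0).symm
      _ ≤ ENNReal.ofReal (8 ^ n * 2 ^ δ * Cw ^ γ * W ^ γ * ((2:ℝ) ^ (-δ)) ^ k) := by
          apply ENNReal.ofReal_le_ofReal
          have := real_annulus n k hn hr hδ (Real.rpow_nonneg hCw0 γ)
            (Real.rpow_nonneg hW0 γ)
          rw [hDdef, hZdef, hRdef]
          exact this
      _ = ENNReal.ofReal (8 ^ n * 2 ^ δ * Cw ^ γ * W ^ γ) *
          ENNReal.ofReal ((2:ℝ) ^ (-δ)) ^ k := by
          rw [← ENNReal.ofReal_pow (by positivity), ← ENNReal.ofReal_mul (by positivity)]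
  have hq1 : ((2:ℝ) ^ (-δ)) < 1 := by
    rw [Real.rpow_neg (by norm_num), inv_lt_one_iff₀]
    right
    exact Real.one_lt_rpow_iff (by norm_num) |>.2 (Or.inl ⟨by norm_num, hδ⟩)
  have hq0 : (0:ℝ) ≤ (2:ℝ) ^ (-δ) := Real.rpow_nonneg (by norm_num) _
  calc ∫⁻ x in T, ENNReal.ofReal (rq ^ δ * w x ^ γ / ‖x - y‖ ^ ((n : ℝ) + δ))
      ≤ ∫⁻ x in ⋃ k, A k, ENNReal.ofReal (rq ^ δ * w x ^ γ / ‖x - y‖ ^ ((n : ℝ) + δ)) :=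
        lintegral_mono_set hTsub
    _ ≤ ∑' k, ∫⁻ x in A k, ENNReal.ofReal (rq ^ δ * w x ^ γ / ‖x - y‖ ^ ((n : ℝ) + δ)) :=
        lintegral_iUnion_le _ _
    _ ≤ ∑' k, ENNReal.ofReal (8 ^ n * 2 ^ δ * Cw ^ γ * W ^ γ) *
          ENNReal.ofReal ((2:ℝ) ^ (-δ)) ^ k := ENNReal.tsum_le_tsum hann
    _ = ENNReal.ofReal (8 ^ n * 2 ^ δ * Cw ^ γ * W ^ γ) *
          (1 - ENNReal.ofReal ((2:ℝ) ^ (-δ)))⁻¹ := by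
        rw [ENNReal.tsum_mul_left, ENNReal.tsum_geometric]
    _ = ENNReal.ofReal ((8 ^ n * 2 ^ δ * (1 - (2:ℝ) ^ (-δ))⁻¹) * (Cw ^ γ * W ^ γ)) := by
        rw [show (1:ℝ≥0∞) = ENNReal.ofReal 1 by simp, ← ENNReal.ofReal_sub _ hq0,
          ← ENNReal.ofReal_inv_of_pos (by linarith), ← ENNReal.ofReal_mul (by positivity)]
        congr 1
        ring

include hw hpos hCw0 hA1 in
lemma one_le_Cw : 1 ≤ Cw := by
  have hae0 : ∀ᵐ x, 0 ≤ w x := hpos.mono fun x hx => hx.le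
  set Q : Set (Rn n) := cube (0 : Rn n) 1 with hQdef
  have hQm : MeasurableSet Q := cube_measurable _ _
  have hvol : volume Q = ENNReal.ofReal 1 := by
    rw [hQdef, volume_cube _ _ (by norm_num)]; norm_num
  have hint : IntegrableOn w Q volume :=
    hw.integrableOn_isCompact (cube_isCompact _ (by norm_num))
  have hI0 : 0 < ∫ x in Q, w x := by
    rw [integral_pos_iff_support_of_nonneg_ae (ae_restrict_of_ae hae0) hint]
    have hnull : (volume.restrict Q) (Function.support w)ᶜ = 0 := by
      have h1 : (Function.support w)ᶜ ⊆ {x : Rn n | ¬ 0 < w x} := by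
        intro x hx
        simp only [Function.mem_support, not_not, mem_compl_iff] at hx
        simp [hx]
      have h2 : volume {x : Rn n | ¬ 0 < w x} = 0 := by
        have := hpos
        rw [ae_iff] at this
        simpa using this
      exact measure_mono_null h1 (le_antisymm
        (le_trans (Measure.restrict_le_self _ ) h2.le) zero_le)
    have hcover : (volume.restrict Q) Set.univ ≤
        (volume.restrict Q) (Function.support w) +
          (volume.restrict Q) (Function.support w)ᶜ := by
      rw [← Set.union_compl_self (Function.support w)]
      exact measure_union_le _ _
    rw [hnull, add_zero, Measure.restrict_apply_univ, hvol] at hcover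
    calc (0:ℝ≥0∞) < ENNReal.ofReal 1 := by norm_num
      _ ≤ _ := hcover
  set E : ℝ := essInf w (volume.restrict Q) with hEdef
  have hEI : E ≤ ∫ x in Q, w x := by
    have hbdd : IsBoundedUnder (· ≥ ·) (ae (volume.restrict Q)) w :=
      ⟨0, by simpa [eventually_map] using ae_restrict_of_ae hae0⟩
    have h1 : ∀ᵐ y ∂(volume.restrict Q), E ≤ w y := ae_essInf_le hbdd
    have h3 : ∫ _y in Q, E ≤ ∫ y in Q, w y := by
      apply integral_mono_ae _ hint h1
      exact integrableOn_const (by rw [hvol]; exact ofReal_ne_top)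
    rwa [setIntegral_const, measureReal_def, hvol, ENNReal.toReal_ofReal (by norm_num), one_smul] at h3
  have hA := hA1 (0 : Rn n) 1 one_pos
  rw [← hQdef, hvol, ENNReal.toReal_ofReal (by norm_num), mul_one] at hA
  have : ∫ x in Q, w x ≤ Cw * ∫ x in Q, w x :=
    hA.trans (mul_le_mul_of_nonneg_left hEI hCw0)
  nlinarith

end MainLemmas

/-- For `w ∈ A₁` and pairwise disjoint cubes `Q_j = Q(c_j,r_j)` with union `Ω` and dilated
union `Ω* = ⋃ 2√n Q_j`:
`∑_j ∫_{Q_j} w^{1/m}(y) ∫_{ℝⁿ∖Ω*} r_j^δ w(x)^{(m-1)/m} |x-y|^{-n-δ} dx dy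
  ≤ C [w]_{A₁}^{(2m-2)/m} w(Ω)`. -/
theorem stmt13 (n m : ℕ) (hn : 0 < n) (hm : 0 < m) (δ : ℝ) (hδ : 0 < δ) :
    ∃ C : ℝ, 0 < C ∧
      ∀ (w : Rn n → ℝ) (Cw : ℝ),
        LocallyIntegrable w volume → (∀ᵐ x, 0 < w x) → 0 ≤ Cw → A1Bound w Cw →
      ∀ (cen : ℕ → Rn n) (rad : ℕ → ℝ), (∀ j, 0 < rad j) →
        (Pairwise fun j k => Disjoint (cube (cen j) (rad j)) (cube (cen k) (rad k))) →
        ∑' j : ℕ,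
            ∫⁻ y in cube (cen j) (rad j),
              ENNReal.ofReal (w y ^ ((1 : ℝ) / m)) *
                ∫⁻ x in (⋃ j' : ℕ, cube (cen j') (2 * Real.sqrt n * rad j'))ᶜ,
                  ENNReal.ofReal
                    (rad j ^ δ * w x ^ (((m : ℝ) - 1) / m) / ‖x - y‖ ^ ((n : ℝ) + δ)) ≤
          ENNReal.ofReal (C * Cw ^ ((2 * (m : ℝ) - 2) / m)) *
            ∫⁻ x in ⋃ j : ℕ, cube (cen j) (rad j), ENNReal.ofReal (w x) := by
  have hq1 : ((2:ℝ) ^ (-δ)) < 1 := by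
    rw [Real.rpow_neg (by norm_num), inv_lt_one_iff₀]
    right
    exact Real.one_lt_rpow_iff (by norm_num) |>.2 (Or.inl ⟨by norm_num, hδ⟩)
  have hq0 : (0:ℝ) ≤ (2:ℝ) ^ (-δ) := Real.rpow_nonneg (by norm_num) _
  have h2δ : (0:ℝ) < 2 ^ δ := Real.rpow_pos_of_pos (by norm_num) δ
  set C : ℝ := 8 ^ n * 2 ^ δ * (1 - (2:ℝ) ^ (-δ))⁻¹ with hCdef
  have hC0 : 0 < C := by
    apply _root_.mul_pos (by positivity)
    rw [inv_pos]; linarith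
  refine ⟨C, hC0, ?_⟩
  intro w Cw hw hpos hCw0 hA1 cen rad hrad hdisj
  have hm1 : (1:ℝ) ≤ (m:ℝ) := by exact_mod_cast hm
  have hm0 : (0:ℝ) < (m:ℝ) := by linarith
  set γ : ℝ := ((m : ℝ) - 1) / m with hγdef
  have hγ0 : 0 ≤ γ := div_nonneg (by linarith) hm0.le
  have hγ1 : γ ≤ 1 := by
    rw [hγdef, div_le_one hm0]; linarith
  have hγm : γ = 1 - 1/(m:ℝ) := by
    rw [hγdef]; field_simp
  have hγsum : γ + 1/(m:ℝ) = 1 := by rw [hγm]; ring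
  have hmi0 : 0 ≤ 1/(m:ℝ) := by positivity
  have hmi1 : 1/(m:ℝ) ≤ 1 := by
    rw [div_le_one hm0]; exact hm1
  have hae0 : ∀ᵐ x, 0 ≤ w x := hpos.mono fun x hx => hx.le
  have hCw1 : 1 ≤ Cw := one_le_Cw hw hpos hCw0 hA1
  -- per-cube bound
  have hterm : ∀ j : ℕ,
      (∫⁻ y in cube (cen j) (rad j),
        ENNReal.ofReal (w y ^ ((1 : ℝ) / m)) *
          ∫⁻ x in (⋃ j' : ℕ, cube (cen j') (2 * Real.sqrt n * rad j'))ᶜ,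
            ENNReal.ofReal
              (rad j ^ δ * w x ^ (((m : ℝ) - 1) / m) / ‖x - y‖ ^ ((n : ℝ) + δ))) ≤
      ENNReal.ofReal (C * Cw ^ γ) * ∫⁻ x in cube (cen j) (rad j), ENNReal.ofReal (w x) := by
    intro j
    set rj : ℝ := rad j with hrjdef
    have hrj : 0 < rj := hrad j
    have hrjn : (0:ℝ) < rj ^ n := pow_pos hrj n
    set Qj : Set (Rn n) := cube (cen j) rj with hQjdef
    set W : ℝ := (∫ z in Qj, w z) / rj ^ n with hWdef
    have hW0 : 0 ≤ W := by
      apply div_nonneg _ hrjn.le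
      exact integral_nonneg_of_ae (ae_restrict_of_ae hae0)
    set Aj : ℝ≥0∞ := ∫⁻ x in Qj, ENNReal.ofReal (w x) with hAjdef
    have hint : IntegrableOn w Qj volume :=
      hw.integrableOn_isCompact (cube_isCompact _ hrj.le)
    have hAjeq : Aj = ENNReal.ofReal (∫ z in Qj, w z) := by
      rw [hAjdef, ← ofReal_integral_eq_lintegral_ofReal hint (ae_restrict_of_ae hae0)]
    have hT : (⋃ j' : ℕ, cube (cen j') (2 * Real.sqrt n * rad j'))ᶜ ⊆
        (cube (cen j) (2 * Real.sqrt n * rj))ᶜ :=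
      compl_subset_compl.2 (subset_iUnion (fun j' => cube (cen j') (2 * Real.sqrt n * rad j')) j)
    have h1 : (∫⁻ y in Qj,
        ENNReal.ofReal (w y ^ ((1 : ℝ) / m)) *
          ∫⁻ x in (⋃ j' : ℕ, cube (cen j') (2 * Real.sqrt n * rad j'))ᶜ,
            ENNReal.ofReal
              (rj ^ δ * w x ^ γ / ‖x - y‖ ^ ((n : ℝ) + δ))) ≤
        ∫⁻ y in Qj, ENNReal.ofReal (w y ^ ((1 : ℝ) / m)) *
          ENNReal.ofReal (C * (Cw ^ γ * W ^ γ)) := by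
      apply lintegral_mono_ae
      filter_upwards [ae_restrict_mem (cube_measurable (cen j) rj)] with y hy
      exact mul_le_mul_right
        (inner_bound hw hpos hCw0 hA1 hn hδ (cen j) hrj hγ0 hγ1 hy hT) _
    have h2 : ∫⁻ y in Qj, ENNReal.ofReal (w y ^ ((1 : ℝ) / m)) *
          ENNReal.ofReal (C * (Cw ^ γ * W ^ γ)) =
        ENNReal.ofReal (C * (Cw ^ γ * W ^ γ)) *
          ∫⁻ y in Qj, ENNReal.ofReal (w y ^ ((1 : ℝ) / m)) := by
      rw [lintegral_mul_const' _ _ ENNReal.ofReal_ne_top, mul_comm]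
    have h3 : ∫⁻ y in Qj, ENNReal.ofReal (w y ^ ((1 : ℝ) / m)) ≤
        Aj ^ ((1:ℝ)/m) * (ENNReal.ofReal (rj ^ n)) ^ γ := by
      have hcongr : ∫⁻ y in Qj, ENNReal.ofReal (w y ^ ((1 : ℝ) / m)) =
          ∫⁻ y in Qj, (ENNReal.ofReal (w y)) ^ ((1:ℝ)/m) := by
        apply lintegral_congr_ae
        filter_upwards [ae_restrict_of_ae hpos] with x hx
        rw [ENNReal.ofReal_rpow_of_pos hx]
      have hmeas : AEMeasurable (fun x => ENNReal.ofReal (w x))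
          (volume.restrict Qj) :=
        (ENNReal.measurable_ofReal.comp_aemeasurable
          hw.aestronglyMeasurable.aemeasurable).restrict
      calc ∫⁻ y in Qj, ENNReal.ofReal (w y ^ ((1 : ℝ) / m))
          = ∫⁻ y in Qj, (ENNReal.ofReal (w y)) ^ ((1:ℝ)/m) := hcongr
        _ ≤ (∫⁻ y in Qj, ENNReal.ofReal (w y)) ^ ((1:ℝ)/m) *
            ((volume.restrict Qj) Set.univ) ^ (1 - (1:ℝ)/m) :=
            lint_rpow_le _ _ hmeas hmi0 hmi1
        _ = Aj ^ ((1:ℝ)/m) * (ENNReal.ofReal (rj ^ n)) ^ γ := by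
            rw [Measure.restrict_apply_univ, hQjdef, volume_cube _ _ hrj.le, ← hγm]
    have h4 : ENNReal.ofReal (W ^ γ) * (ENNReal.ofReal (rj ^ n)) ^ γ ≤ Aj ^ γ := by
      rw [← ENNReal.ofReal_rpow_of_nonneg hW0 hγ0,
        ← ENNReal.mul_rpow_of_nonneg _ _ hγ0,
        ← ENNReal.ofReal_mul hW0]
      apply ENNReal.rpow_le_rpow _ hγ0
      rw [hWdef, div_mul_cancel₀ _ hrjn.ne', hAjeq]
    have hAfin : Aj ≠ ⊤ := by
      rw [hAjeq]; exact ENNReal.ofReal_ne_top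
    calc (∫⁻ y in Qj,
        ENNReal.ofReal (w y ^ ((1 : ℝ) / m)) *
          ∫⁻ x in (⋃ j' : ℕ, cube (cen j') (2 * Real.sqrt n * rad j'))ᶜ,
            ENNReal.ofReal
              (rj ^ δ * w x ^ γ / ‖x - y‖ ^ ((n : ℝ) + δ)))
        ≤ ENNReal.ofReal (C * (Cw ^ γ * W ^ γ)) *
          ∫⁻ y in Qj, ENNReal.ofReal (w y ^ ((1 : ℝ) / m)) := h1.trans h2.le
      _ ≤ ENNReal.ofReal (C * (Cw ^ γ * W ^ γ)) *
          (Aj ^ ((1:ℝ)/m) * (ENNReal.ofReal (rj ^ n)) ^ γ) := mul_le_mul_right h3 _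
      _ = ENNReal.ofReal (C * Cw ^ γ) *
          ((ENNReal.ofReal (W ^ γ) * (ENNReal.ofReal (rj ^ n)) ^ γ) * Aj ^ ((1:ℝ)/m)) := by
          rw [show C * (Cw ^ γ * W ^ γ) = (C * Cw ^ γ) * W ^ γ by ring,
            ENNReal.ofReal_mul (by positivity)]
          ring
      _ ≤ ENNReal.ofReal (C * Cw ^ γ) * (Aj ^ γ * Aj ^ ((1:ℝ)/m)) :=
          mul_le_mul_right (mul_le_mul_left h4 _) _
      _ = ENNReal.ofReal (C * Cw ^ γ) * Aj := by
          rw [← ENNReal.rpow_add_of_nonneg _ _ hγ0 hmi0, hγsum, ENNReal.rpow_one]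
  -- sum over j
  have hsum : ∑' j : ℕ, (ENNReal.ofReal (C * Cw ^ γ) *
      ∫⁻ x in cube (cen j) (rad j), ENNReal.ofReal (w x)) =
      ENNReal.ofReal (C * Cw ^ γ) *
        ∫⁻ x in ⋃ j : ℕ, cube (cen j) (rad j), ENNReal.ofReal (w x) := by
    rw [ENNReal.tsum_mul_left,
      lintegral_iUnion (fun j => cube_measurable (cen j) (rad j)) hdisj]
  have hfinal : ENNReal.ofReal (C * Cw ^ γ) ≤
      ENNReal.ofReal (C * Cw ^ ((2 * (m : ℝ) - 2) / m)) := by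
    apply ENNReal.ofReal_le_ofReal
    apply mul_le_mul_of_nonneg_left _ hC0.le
    apply Real.rpow_le_rpow_of_exponent_le hCw1
    rw [hγdef]
    rw [div_le_div_iff₀ hm0 hm0]
    nlinarith
  calc ∑' j : ℕ,
      ∫⁻ y in cube (cen j) (rad j),
        ENNReal.ofReal (w y ^ ((1 : ℝ) / m)) *
          ∫⁻ x in (⋃ j' : ℕ, cube (cen j') (2 * Real.sqrt n * rad j'))ᶜ,
            ENNReal.ofReal
              (rad j ^ δ * w x ^ (((m : ℝ) - 1) / m) / ‖x - y‖ ^ ((n : ℝ) + δ))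
      ≤ ∑' j : ℕ, (ENNReal.ofReal (C * Cw ^ γ) *
          ∫⁻ x in cube (cen j) (rad j), ENNReal.ofReal (w x)) :=
        ENNReal.tsum_le_tsum hterm
    _ = ENNReal.ofReal (C * Cw ^ γ) *
        ∫⁻ x in ⋃ j : ℕ, cube (cen j) (rad j), ENNReal.ofReal (w x) := hsum
    _ ≤ ENNReal.ofReal (C * Cw ^ ((2 * (m : ℝ) - 2) / m)) *
        ∫⁻ x in ⋃ j : ℕ, cube (cen j) (rad j), ENNReal.ofReal (w x) :=
        mul_le_mul_left hfinal _
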